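/- Fix ξ ∈ (0,1). The function x ↦ G(x,ξ) is twice continuously differentiable on [0,1], satisfies G(0,ξ) = 0, ∂_x G(1,ξ) = 0 and ∂_x² G(0,ξ) = 0, and for every twice continuously differentiable function v : [0,1] → ℝ with v(0) = 0 and v'(1) = 0 one has ∫_0^1 ∂_x² G(x,ξ) · v''(x) dx = v(ξ). That is, G(·,ξ) is the Green's function of the steady-state simply supported–shear hinged beam with a unit Dirac load at ξ. -/

import Mathlib

open MeasureTheory

/-- The Green's function of the simply supported–shear hinged beam:
`G(x,ξ) = −x³/6 + xξ(1 − ξ/2)` for `x < ξ`, and `G(x,ξ) = −ξ³/6 + ξx(1 − x/2)` for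
`ξ ≤ x`. -/
noncomputable def G (x ξ : ℝ) : ℝ :=
  if x < ξ then -x ^ 3 / 6 + x * ξ * (1 - ξ / 2) else -ξ ^ 3 / 6 + ξ * x * (1 - x / 2)

/-- For `ξ ∈ (0,1)`: `G(·,ξ)` is `C²` on `[0,1]`, satisfies `G(0,ξ) = 0`,
`∂ₓG(1,ξ) = 0`, `∂ₓ²G(0,ξ) = 0`, and for every `C²` function `v` on `[0,1]` with
`v(0) = 0`, `v'(1) = 0`, one has `∫_0^1 ∂ₓ²G(x,ξ) v''(x) dx = v(ξ)`; i.e. `G(·,ξ)` is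
the Green's function with a unit Dirac load at `ξ`. -/
theorem stmt5 (ξ : ℝ) (hξ : ξ ∈ Set.Ioo (0:ℝ) 1) :
    ContDiffOn ℝ 2 (fun x => G x ξ) (Set.Icc 0 1) ∧
    G 0 ξ = 0 ∧
    derivWithin (fun x => G x ξ) (Set.Icc 0 1) 1 = 0 ∧
    iteratedDerivWithin 2 (fun x => G x ξ) (Set.Icc 0 1) 0 = 0 ∧
    ∀ v : ℝ → ℝ, ContDiffOn ℝ 2 v (Set.Icc 0 1) → v 0 = 0 →
      derivWithin v (Set.Icc 0 1) 1 = 0 →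
      ∫ x in (0:ℝ)..1,
        iteratedDerivWithin 2 (fun y => G y ξ) (Set.Icc 0 1) x *
          iteratedDerivWithin 2 v (Set.Icc 0 1) x = v ξ := by
  obtain ⟨hξ0, hξ1⟩ := hξ
  have hus : UniqueDiffOn ℝ (Set.Icc (0:ℝ) 1) := uniqueDiffOn_Icc one_pos
  set g1 : ℝ → ℝ := fun x => if x < ξ then -x ^ 2 / 2 + ξ * (1 - ξ / 2) else ξ * (1 - x)
    with hg1def
  set g2 : ℝ → ℝ := fun x => -(min x ξ) with hg2def
  -- derivatives of polynomial pieces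
  have hp1 : ∀ x : ℝ, HasDerivAt (fun y : ℝ => -y ^ 3 / 6 + y * ξ * (1 - ξ / 2))
      (-x ^ 2 / 2 + ξ * (1 - ξ / 2)) x := by
    intro x
    have h := ((hasDerivAt_pow 3 x).neg.div_const 6).add
      (((hasDerivAt_id x).mul_const ξ).mul_const (1 - ξ / 2))
    exact h.congr_deriv (by push_cast; ring)
  have hp2 : ∀ x : ℝ, HasDerivAt (fun y : ℝ => -ξ ^ 3 / 6 + ξ * y * (1 - y / 2))
      (ξ * (1 - x)) x := by
    intro x
    have h := (hasDerivAt_const x (-ξ ^ 3 / 6)).add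
      (((hasDerivAt_id x).const_mul ξ).mul (((hasDerivAt_id x).div_const 2).const_sub 1))
    exact h.congr_deriv (by simp; ring)
  have hq1 : ∀ x : ℝ, HasDerivAt (fun y : ℝ => -y ^ 2 / 2 + ξ * (1 - ξ / 2)) (-x) x := by
    intro x
    have h := ((hasDerivAt_pow 2 x).neg.div_const 2).add_const (ξ * (1 - ξ / 2))
    exact h.congr_deriv (by push_cast; ring)
  have hq2 : ∀ x : ℝ, HasDerivAt (fun y : ℝ => ξ * (1 - y)) (-ξ) x := by
    intro x
    have h := ((hasDerivAt_id x).const_sub 1).const_mul ξ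
    exact h.congr_deriv (by ring)
  -- G equals the pieces on half-lines
  have hGle : ∀ y ∈ Set.Iic ξ, G y ξ = -y ^ 3 / 6 + y * ξ * (1 - ξ / 2) := by
    intro y hy
    by_cases h : y < ξ
    · simp only [G, if_pos h]
    · have hyx : y = ξ := le_antisymm hy (not_lt.mp h)
      simp only [G, if_neg h]
      rw [hyx]
  have hGge : ∀ y ∈ Set.Ici ξ, G y ξ = -ξ ^ 3 / 6 + ξ * y * (1 - y / 2) := by
    intro y hy
    simp only [G, if_neg (not_lt.mpr (Set.mem_Ici.mp hy))]
  -- first derivative everywhere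
  have hd1 : ∀ x : ℝ, HasDerivAt (fun y => G y ξ) (g1 x) x := by
    intro x
    rcases lt_trichotomy x ξ with hx | hx | hx
    · have heq : (fun y => G y ξ) =ᶠ[nhds x] fun y : ℝ => -y ^ 3 / 6 + y * ξ * (1 - ξ / 2) := by
        filter_upwards [Iio_mem_nhds hx] with y hy
        simp only [G, if_pos (Set.mem_Iio.mp hy)]
      have h := (hp1 x).congr_of_eventuallyEq heq
      simpa only [hg1def, if_pos hx] using h
    · rw [hx, show g1 ξ = ξ * (1 - ξ) by simp only [hg1def, if_neg (lt_irrefl ξ)]]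
      have hL : HasDerivWithinAt (fun y => G y ξ) (ξ * (1 - ξ)) (Set.Iic ξ) ξ := by
        rw [show ξ * (1 - ξ) = -ξ ^ 2 / 2 + ξ * (1 - ξ / 2) by ring]
        exact ((hp1 ξ).hasDerivWithinAt (s := Set.Iic ξ)).congr hGle (hGle ξ Set.self_mem_Iic)
      have hR : HasDerivWithinAt (fun y => G y ξ) (ξ * (1 - ξ)) (Set.Ici ξ) ξ :=
        ((hp2 ξ).hasDerivWithinAt (s := Set.Ici ξ)).congr hGge (hGge ξ Set.self_mem_Ici)
      have h := hL.union hR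
      rw [Set.Iic_union_Ici] at h
      exact hasDerivWithinAt_univ.mp h
    · have heq : (fun y => G y ξ) =ᶠ[nhds x] fun y : ℝ => -ξ ^ 3 / 6 + ξ * y * (1 - y / 2) := by
        filter_upwards [Ioi_mem_nhds hx] with y hy
        simp only [G, if_neg (not_lt.mpr (le_of_lt (Set.mem_Ioi.mp hy)))]
      have h := (hp2 x).congr_of_eventuallyEq heq
      simpa only [hg1def, if_neg (not_lt.mpr (le_of_lt hx))] using h
  -- second derivative everywhere
  have hg1le : ∀ y ∈ Set.Iic ξ, g1 y = -y ^ 2 / 2 + ξ * (1 - ξ / 2) := by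
    intro y hy
    by_cases h : y < ξ
    · simp only [hg1def, if_pos h]
    · have hyx : y = ξ := le_antisymm hy (not_lt.mp h)
      simp only [hg1def, if_neg h]
      rw [hyx]; ring
  have hg1ge : ∀ y ∈ Set.Ici ξ, g1 y = ξ * (1 - y) := by
    intro y hy
    simp only [hg1def, if_neg (not_lt.mpr (Set.mem_Ici.mp hy))]
  have hd2 : ∀ x : ℝ, HasDerivAt g1 (g2 x) x := by
    intro x
    rcases lt_trichotomy x ξ with hx | hx | hx
    · have heq : g1 =ᶠ[nhds x] fun y : ℝ => -y ^ 2 / 2 + ξ * (1 - ξ / 2) := by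
        filter_upwards [Iio_mem_nhds hx] with y hy
        simp only [hg1def, if_pos (Set.mem_Iio.mp hy)]
      have h := (hq1 x).congr_of_eventuallyEq heq
      simpa only [hg2def, min_eq_left (le_of_lt hx)] using h
    · rw [hx, show g2 ξ = -ξ by simp [hg2def]]
      have hL : HasDerivWithinAt g1 (-ξ) (Set.Iic ξ) ξ := by
        rw [show -ξ = -ξ from rfl]
        have h := ((hq1 ξ).hasDerivWithinAt (s := Set.Iic ξ)).congr hg1le
          (hg1le ξ Set.self_mem_Iic)
        exact h
      have hR : HasDerivWithinAt g1 (-ξ) (Set.Ici ξ) ξ := by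
        have h := ((hq2 ξ).hasDerivWithinAt (s := Set.Ici ξ)).congr hg1ge
          (hg1ge ξ Set.self_mem_Ici)
        exact h
      have h := hL.union hR
      rw [Set.Iic_union_Ici] at h
      exact hasDerivWithinAt_univ.mp h
    · have heq : g1 =ᶠ[nhds x] fun y : ℝ => ξ * (1 - y) := by
        filter_upwards [Ioi_mem_nhds hx] with y hy
        simp only [hg1def, if_neg (not_lt.mpr (le_of_lt (Set.mem_Ioi.mp hy)))]
      have h := (hq2 x).congr_of_eventuallyEq heq
      simpa only [hg2def, min_eq_right (le_of_lt hx)] using h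
  -- global C² smoothness
  have hdiff : Differentiable ℝ (fun x => G x ξ) := fun x => (hd1 x).differentiableAt
  have hderiv : deriv (fun x => G x ξ) = g1 := funext fun x => (hd1 x).deriv
  have hdiff1 : Differentiable ℝ g1 := fun x => (hd2 x).differentiableAt
  have hderiv1 : deriv g1 = g2 := funext fun x => (hd2 x).deriv
  have hcont2 : Continuous g2 := (continuous_id.min continuous_const).neg
  have hC2 : ContDiff ℝ 2 (fun x => G x ξ) := by
    rw [show (2 : WithTop ℕ∞) = 1 + 1 from rfl, contDiff_succ_iff_deriv]
    refine ⟨hdiff, by simp, ?_⟩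
    rw [hderiv, contDiff_one_iff_deriv]
    exact ⟨hdiff1, by rw [hderiv1]; exact hcont2⟩
  -- derivWithin and iteratedDerivWithin identification
  have hdw : ∀ x ∈ Set.Icc (0:ℝ) 1, derivWithin (fun y => G y ξ) (Set.Icc 0 1) x = g1 x :=
    fun x hx => (hd1 x).hasDerivWithinAt.derivWithin (hus x hx)
  have hiter : ∀ x ∈ Set.Icc (0:ℝ) 1,
      iteratedDerivWithin 2 (fun y => G y ξ) (Set.Icc 0 1) x = g2 x := by
    intro x hx
    have h1eq : ∀ y ∈ Set.Icc (0:ℝ) 1,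
        iteratedDerivWithin 1 (fun y => G y ξ) (Set.Icc 0 1) y = g1 y := by
      intro y hy
      rw [iteratedDerivWithin_one]
      exact hdw y hy
    rw [show (2:ℕ) = 1 + 1 from rfl, iteratedDerivWithin_succ,
      derivWithin_congr h1eq (h1eq x hx)]
    exact (hd2 x).hasDerivWithinAt.derivWithin (hus x hx)
  have h0mem : (0:ℝ) ∈ Set.Icc (0:ℝ) 1 := by norm_num
  have h1mem : (1:ℝ) ∈ Set.Icc (0:ℝ) 1 := by norm_num
  refine ⟨hC2.contDiffOn, ?_, ?_, ?_, ?_⟩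
  · simp [G, hξ0]
  · rw [hdw 1 h1mem]
    simp [hg1def, not_lt.mpr (le_of_lt hξ1)]
  · rw [hiter 0 h0mem]
    simp [hg2def, min_eq_left (le_of_lt hξ0)]
  · intro v hv hv0 hv1
    set s : Set ℝ := Set.Icc 0 1 with hsdef
    set V1 : ℝ → ℝ := derivWithin v s with hV1def
    set V2 : ℝ → ℝ := iteratedDerivWithin 2 v s with hV2def
    have hv2 : ContDiffOn ℝ ((1 : WithTop ℕ∞) + 1) v s := by
      rw [show (1 : WithTop ℕ∞) + 1 = 2 from rfl]; exact hv
    rw [contDiffOn_succ_iff_derivWithin hus] at hv2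
    obtain ⟨hvd, -, hV1c1⟩ := hv2
    have hV1d : DifferentiableOn ℝ V1 s := hV1c1.differentiableOn one_ne_zero
    have hV1cont : ContinuousOn V1 s := hV1d.continuousOn
    have hvcont : ContinuousOn v s := hvd.continuousOn
    -- V2 = derivWithin V1
    have hV2eq : ∀ x ∈ s, V2 x = derivWithin V1 s x := by
      intro x hx
      have h1eq : ∀ y ∈ s, iteratedDerivWithin 1 v s y = V1 y := by
        intro y hy
        rw [iteratedDerivWithin_one]
      rw [hV2def, show (2:ℕ) = 1 + 1 from rfl, iteratedDerivWithin_succ,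
        derivWithin_congr h1eq (h1eq x hx)]
    have hV2cont : ContinuousOn V2 s := by
      refine (hV1c1.continuousOn_derivWithin hus le_rfl).congr ?_
      intro x hx
      exact hV2eq x hx
    -- interior derivatives
    have hviD : ∀ x ∈ Set.Ioo (0:ℝ) 1, HasDerivAt v (V1 x) x := by
      intro x hx
      exact ((hvd x (Set.Ioo_subset_Icc_self hx)).hasDerivWithinAt).hasDerivAt
        (Icc_mem_nhds hx.1 hx.2)
    have hV1iD : ∀ x ∈ Set.Ioo (0:ℝ) 1, HasDerivAt V1 (V2 x) x := by
      intro x hx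
      have h := ((hV1d x (Set.Ioo_subset_Icc_self hx)).hasDerivWithinAt).hasDerivAt
        (Icc_mem_nhds hx.1 hx.2)
      rwa [← hV2eq x (Set.Ioo_subset_Icc_self hx)] at h
    have hξs : ξ ∈ s := ⟨le_of_lt hξ0, le_of_lt hξ1⟩
    -- integrand congruence
    have hcong : ∀ x ∈ Set.uIcc (0:ℝ) 1,
        iteratedDerivWithin 2 (fun y => G y ξ) s x * V2 x = g2 x * V2 x := by
      intro x hx
      rw [Set.uIcc_of_le (by norm_num : (0:ℝ) ≤ 1)] at hx
      rw [hiter x hx]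
    rw [intervalIntegral.integral_congr hcong]
    -- split the integral
    have hI1 : IntervalIntegrable (fun x => g2 x * V2 x) volume 0 ξ := by
      apply ContinuousOn.intervalIntegrable
      apply hcont2.continuousOn.mul
      apply hV2cont.mono
      rw [Set.uIcc_of_le (le_of_lt hξ0)]
      exact Set.Icc_subset_Icc le_rfl (le_of_lt hξ1)
    have hI2 : IntervalIntegrable (fun x => g2 x * V2 x) volume ξ 1 := by
      apply ContinuousOn.intervalIntegrable
      apply hcont2.continuousOn.mul
      apply hV2cont.mono
      rw [Set.uIcc_of_le (le_of_lt hξ1)]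
      exact Set.Icc_subset_Icc (le_of_lt hξ0) le_rfl
    rw [← intervalIntegral.integral_add_adjacent_intervals hI1 hI2]
    -- first piece
    have hpiece1 : ∫ x in (0:ℝ)..ξ, g2 x * V2 x = ∫ x in (0:ℝ)..ξ, -(x * V2 x) := by
      apply intervalIntegral.integral_congr
      intro x hx
      rw [Set.uIcc_of_le (le_of_lt hξ0)] at hx
      simp [hg2def, min_eq_left hx.2]
    have hpiece2 : ∫ x in ξ..(1:ℝ), g2 x * V2 x = ∫ x in ξ..(1:ℝ), -(ξ * V2 x) := by
      apply intervalIntegral.integral_congr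
      intro x hx
      rw [Set.uIcc_of_le (le_of_lt hξ1)] at hx
      simp [hg2def, min_eq_right hx.1]
    have hsub1 : Set.Icc (0:ℝ) ξ ⊆ s := Set.Icc_subset_Icc le_rfl (le_of_lt hξ1)
    have hsub2 : Set.Icc ξ (1:ℝ) ⊆ s := Set.Icc_subset_Icc (le_of_lt hξ0) le_rfl
    have hval1 : ∫ x in (0:ℝ)..ξ, -(x * V2 x) = v ξ - ξ * V1 ξ := by
      have hFTC := intervalIntegral.integral_eq_sub_of_hasDeriv_right_of_le (le_of_lt hξ0)
        (f := fun x => v x - x * V1 x) (f' := fun x => -(x * V2 x))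
        ((hvcont.mono hsub1).sub (continuousOn_id.mul (hV1cont.mono hsub1)))
        ?_ ?_
      · rw [hFTC]
        show (v ξ - ξ * V1 ξ) - (v 0 - 0 * V1 0) = v ξ - ξ * V1 ξ
        rw [hv0]; ring
      · intro x hx
        have hx' : x ∈ Set.Ioo (0:ℝ) 1 := ⟨hx.1, lt_trans hx.2 hξ1⟩
        have h := ((hviD x hx').sub ((hasDerivAt_id x).mul (hV1iD x hx'))).hasDerivWithinAt
          (s := Set.Ioi x)
        exact h.congr_deriv (by simp only [id_eq]; ring)
      · apply ContinuousOn.intervalIntegrable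
        rw [Set.uIcc_of_le (le_of_lt hξ0)]
        exact (continuousOn_id.mul (hV2cont.mono hsub1)).neg
    have hval2 : ∫ x in ξ..(1:ℝ), -(ξ * V2 x) = ξ * V1 ξ := by
      have hFTC := intervalIntegral.integral_eq_sub_of_hasDeriv_right_of_le (le_of_lt hξ1)
        (f := fun x => -(ξ * V1 x)) (f' := fun x => -(ξ * V2 x))
        ((continuousOn_const.mul (hV1cont.mono hsub2)).neg)
        ?_ ?_
      · rw [hFTC]
        show -(ξ * V1 1) - -(ξ * V1 ξ) = ξ * V1 ξ
        have h1 : V1 1 = 0 := hv1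
        rw [h1]; ring
      · intro x hx
        have hx' : x ∈ Set.Ioo (0:ℝ) 1 := ⟨lt_trans hξ0 hx.1, hx.2⟩
        exact (((hV1iD x hx').const_mul ξ).neg).hasDerivWithinAt
      · apply ContinuousOn.intervalIntegrable
        rw [Set.uIcc_of_le (le_of_lt hξ1)]
        exact ((continuousOn_const.mul (hV2cont.mono hsub2))).neg
    rw [hpiece1, hpiece2, hval1, hval2]
    ring
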